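/- A module M over a ring R is co-Kasch if and only if for every element m of M and every simple right R-module S, Hom_R(mR, S) ≠ 0 implies Hom_R(M, S) ≠ 0. -/

import Mathlib

/-- A module `M` is *co-Kasch* if every simple subfactor of `M`
(i.e. every simple submodule of a quotient of `M`) is a homomorphic image of `M`. -/
def IsCoKasch (R : Type*) [Ring R] (M : Type*) [AddCommGroup M] [Module R M] : Prop :=
  ∀ (K : Submodule R M) (S : Submodule R (M ⧸ K)), IsSimpleModule R S →
    ∃ f : M →ₗ[R] S, Function.Surjective f

/-- `M` is co-Kasch iff for every `m : M` and every simple module `S`,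
`Hom(mR, S) ≠ 0` implies `Hom(M, S) ≠ 0`. -/
theorem stmt0 {R : Type u} [Ring R] {M : Type v} [AddCommGroup M] [Module R M] :
    IsCoKasch R M ↔
      ∀ (m : M) (S : Type v) [AddCommGroup S] [Module R S], IsSimpleModule R S →
        (∃ f : (Submodule.span R {m}) →ₗ[R] S, f ≠ 0) → ∃ g : M →ₗ[R] S, g ≠ 0 := by
  constructor
  · rintro h m S _ _ hS ⟨f, hf⟩
    haveI := hS
    haveI := IsSimpleModule.nontrivial R S
    have hfs : Function.Surjective f := by
      rw [← LinearMap.range_eq_top]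
      rcases hS.1.2 (LinearMap.range f) with h' | h'
      · exact absurd (LinearMap.range_eq_bot.mp h') hf
      · exact h'
    have hker : LinearMap.ker
        (((LinearMap.ker f).map (Submodule.span R ({m} : Set M)).subtype).mkQ.comp
          (Submodule.span R ({m} : Set M)).subtype) = LinearMap.ker f := by
      ext x
      simp only [LinearMap.mem_ker, LinearMap.comp_apply, Submodule.mkQ_apply,
        Submodule.Quotient.mk_eq_zero, Submodule.mem_map, Submodule.subtype_apply]
      constructor
      · rintro ⟨y, hy, hxy⟩
        rwa [show y = x from Subtype.ext hxy] at hy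
      · intro hx
        exact ⟨x, hx, rfl⟩
    let φ := (((LinearMap.ker f).map (Submodule.span R ({m} : Set M)).subtype).mkQ.comp
      (Submodule.span R ({m} : Set M)).subtype)
    let e : S ≃ₗ[R] LinearMap.range φ :=
      (f.quotKerEquivOfSurjective hfs).symm ≪≫ₗ
        (Submodule.quotEquivOfEq _ _ hker.symm) ≪≫ₗ φ.quotKerEquivRange
    haveI : IsSimpleModule R (LinearMap.range φ) := IsSimpleModule.congr e.symm
    obtain ⟨g0, hg0⟩ :=
      h ((LinearMap.ker f).map (Submodule.span R ({m} : Set M)).subtype)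
        (LinearMap.range φ) this
    refine ⟨e.symm.toLinearMap ∘ₗ g0, fun h0 => ?_⟩
    obtain ⟨s, hs⟩ := exists_ne (0 : S)
    obtain ⟨x, hx⟩ := (e.symm.surjective.comp hg0) s
    apply hs
    rw [← hx]
    have : (e.symm.toLinearMap ∘ₗ g0) x = 0 := by rw [h0]; rfl
    exact this
  · intro h K S hS
    haveI := hS
    haveI := IsSimpleModule.nontrivial R (↥S)
    obtain ⟨s, hs⟩ := exists_ne (0 : S)
    obtain ⟨m, hm⟩ := K.mkQ_surjective s.1
    have hmem : ∀ x : Submodule.span R ({m} : Set M),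
        (K.mkQ.comp (Submodule.span R ({m} : Set M)).subtype) x ∈ S := by
      rintro ⟨x, hx⟩
      refine Submodule.span_induction (p := fun y _ => K.mkQ y ∈ S) ?_ ?_ ?_ ?_ hx
      · rintro y rfl
        rw [Submodule.mkQ_apply] at hm ⊢
        rw [hm]
        exact s.2
      · simp
      · intro a b _ _ ha hb
        rw [map_add]; exact S.add_mem ha hb
      · intro r a _ ha
        rw [map_smul]; exact S.smul_mem r ha
    have hf : (K.mkQ.comp (Submodule.span R ({m} : Set M)).subtype).codRestrict S hmem ≠ 0 := by
      intro h0
      apply hs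
      refine Subtype.ext ?_
      have h1 : (((K.mkQ.comp (Submodule.span R ({m} : Set M)).subtype).codRestrict S hmem)
          ⟨m, Submodule.mem_span_singleton_self m⟩ : S) = 0 := by rw [h0]; rfl
      have h2 : ((((K.mkQ.comp (Submodule.span R ({m} : Set M)).subtype).codRestrict S hmem)
          ⟨m, Submodule.mem_span_singleton_self m⟩ : S) : M ⧸ K) = K.mkQ m := rfl
      rw [← hm, ← h2, h1]
    obtain ⟨g, hg⟩ := h m S hS
      ⟨(K.mkQ.comp (Submodule.span R ({m} : Set M)).subtype).codRestrict S hmem, hf⟩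
    refine ⟨g, ?_⟩
    rw [← LinearMap.range_eq_top]
    rcases hS.1.2 (LinearMap.range g) with h' | h'
    · exact absurd (LinearMap.range_eq_bot.mp h') hg
    · exact h'
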